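/- Let ξ₁,…,ξ_t be exchangeable {0,1}-valued random variables, set b = 2⌊t^{1/10}/2⌋, and suppose P(ξ₁ = ⋯ = ξ_b = 1) ≤ q^b for some q ∈ (0,1). Then there is an absolute constant t₀ such that for all t ≥ t₀, P(Σ_{i=1}^t ξ_i ≥ t^{3/5} + (1 + t^{−1/12})·q·t) ≤ exp(−t^{1/70}). -/

import Mathlib

open MeasureTheory ProbabilityTheory
open ENNReal Real



lemma measSet_allOne {t : ℕ} (A : Finset (Fin t)) :
    MeasurableSet {f : Fin t → ℝ | ∀ i ∈ A, f i = 1} := by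
  have : {f : Fin t → ℝ | ∀ i ∈ A, f i = 1} = ⋂ i ∈ A, (fun f : Fin t → ℝ => f i) ⁻¹' {1} := by
    ext f; simp [Set.mem_iInter]
  rw [this]
  exact MeasurableSet.biInter (A : Set (Fin t)).to_countable
    (fun i _ => (measurable_pi_apply i) (measurableSet_singleton 1))

lemma prob_eq_of_exchangeable {t : ℕ} {Ω : Type} [MeasureSpace Ω]
    (ξ : Fin t → Ω → ℝ) (hmeas : ∀ i, Measurable (ξ i))
    (hexch : ∀ σ : Equiv.Perm (Fin t),
      Measure.map (fun ω => fun i => ξ (σ i) ω) ℙ = Measure.map (fun ω => fun i => ξ i ω) ℙ)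
    (A B : Finset (Fin t)) (hcard : A.card = B.card) :
    ℙ {ω | ∀ i ∈ A, ξ i ω = 1} = ℙ {ω | ∀ i ∈ B, ξ i ω = 1} := by
  classical
  have hc : Fintype.card {x // x ∈ A} = Fintype.card {x // x ∈ B} := by
    simp [Fintype.card_coe, hcard]
  let e : {x // x ∈ A} ≃ {x // x ∈ B} := Fintype.equivOfCardEq hc
  let σ : Equiv.Perm (Fin t) := e.extendSubtype
  have himg : A.image σ = B := by
    apply Finset.eq_of_subset_of_card_le
    · intro j hj
      rcases Finset.mem_image.mp hj with ⟨i, hi, rfl⟩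
      exact e.extendSubtype_mem i hi
    · rw [Finset.card_image_of_injective _ σ.injective, hcard]
  have hΦ : Measurable (fun ω => fun i => ξ i ω) :=
    measurable_pi_lambda _ (fun i => hmeas i)
  have hΦσ : Measurable (fun ω => fun i => ξ (σ i) ω) :=
    measurable_pi_lambda _ (fun i => hmeas (σ i))
  have key := congrArg (fun μ => μ {f : Fin t → ℝ | ∀ i ∈ A, f i = 1}) (hexch σ)
  simp only [Measure.map_apply hΦσ (measSet_allOne A),
    Measure.map_apply hΦ (measSet_allOne A)] at key
  have h1 : (fun ω => fun i => ξ (σ i) ω) ⁻¹' {f : Fin t → ℝ | ∀ i ∈ A, f i = 1}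
      = {ω | ∀ i ∈ B, ξ i ω = 1} := by
    ext ω
    simp only [Set.mem_preimage, Set.mem_setOf_eq, ← himg, Finset.forall_mem_image]
  have h2 : (fun ω => fun i => ξ i ω) ⁻¹' {f : Fin t → ℝ | ∀ i ∈ A, f i = 1}
      = {ω | ∀ i ∈ A, ξ i ω = 1} := rfl
  rw [h1, h2] at key
  exact key.symm


lemma choose_count_markov {t b N : ℕ} {Ω : Type} [MeasureSpace Ω]
    (ξ : Fin t → Ω → ℝ) (hmeas : ∀ i, Measurable (ξ i)) (E : Set Ω) (hE : MeasurableSet E)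
    (hcount : ∀ ω ∈ E, N ≤ (Finset.univ.filter (fun i => ξ i ω = 1)).card) :
    (N.choose b : ℝ≥0∞) * ℙ E
      ≤ ∑ A ∈ Finset.powersetCard b (Finset.univ : Finset (Fin t)),
          ℙ {ω | ∀ i ∈ A, ξ i ω = 1} := by
  classical
  have hEA : ∀ A : Finset (Fin t), MeasurableSet {ω | ∀ i ∈ A, ξ i ω = 1} := by
    intro A
    have : {ω | ∀ i ∈ A, ξ i ω = 1} = ⋂ i ∈ A, (ξ i) ⁻¹' {1} := by
      ext ω; simp
    rw [this]
    exact MeasurableSet.biInter (A : Set (Fin t)).to_countable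
      (fun i _ => (hmeas i) (measurableSet_singleton 1))
  have hsum := lintegral_finset_sum (μ := (ℙ : Measure Ω))
    (Finset.powersetCard b (Finset.univ : Finset (Fin t)))
    (f := fun A ω => Set.indicator {ω' | ∀ i ∈ A, ξ i ω' = 1} (fun _ => (1 : ℝ≥0∞)) ω)
    (fun A _ => measurable_const.indicator (hEA A))
  have hind : ∀ A : Finset (Fin t),
      ∫⁻ ω, Set.indicator {ω' | ∀ i ∈ A, ξ i ω' = 1} (fun _ => (1 : ℝ≥0∞)) ω
        = ℙ {ω | ∀ i ∈ A, ξ i ω = 1} := by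
    intro A
    rw [lintegral_indicator (hEA A) _, setLIntegral_const, one_mul]
  have step2 : ∀ ω : Ω, ∑ A ∈ Finset.powersetCard b (Finset.univ : Finset (Fin t)),
      Set.indicator {ω' | ∀ i ∈ A, ξ i ω' = 1} (fun _ => (1 : ℝ≥0∞)) ω
      = ((Finset.univ.filter (fun i => ξ i ω = 1)).card.choose b : ℝ≥0∞) := by
    intro ω
    have h1 : ∀ A : Finset (Fin t),
        Set.indicator {ω' | ∀ i ∈ A, ξ i ω' = 1} (fun _ => (1 : ℝ≥0∞)) ω
        = if A ⊆ Finset.univ.filter (fun i => ξ i ω = 1) then 1 else 0 := by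
      intro A
      rw [Set.indicator_apply]
      congr 1
      simp [Set.mem_setOf_eq, Finset.subset_iff]
    simp_rw [h1, Finset.sum_boole]
    norm_cast
    rw [← Finset.card_powersetCard]
    congr 1
    ext A
    simp only [Finset.mem_powersetCard, Finset.mem_filter, Finset.subset_univ, true_and]
    tauto
  have step3 : ∀ ω, Set.indicator E (fun _ => (N.choose b : ℝ≥0∞)) ω
      ≤ ((Finset.univ.filter (fun i => ξ i ω = 1)).card.choose b : ℝ≥0∞) := by
    intro ω
    rw [Set.indicator_apply]
    split_ifs with h
    · exact_mod_cast Nat.cast_le.mpr (Nat.choose_le_choose b (hcount ω h))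
    · exact zero_le
  calc (N.choose b : ℝ≥0∞) * ℙ E
      = ∫⁻ ω, Set.indicator E (fun _ => (N.choose b : ℝ≥0∞)) ω := by
        rw [lintegral_indicator hE _, setLIntegral_const, mul_comm]
    _ ≤ ∫⁻ ω, ((Finset.univ.filter (fun i => ξ i ω = 1)).card.choose b : ℝ≥0∞) :=
        lintegral_mono step3
    _ = ∫⁻ ω, ∑ A ∈ Finset.powersetCard b (Finset.univ : Finset (Fin t)),
          Set.indicator {ω' | ∀ i ∈ A, ξ i ω' = 1} (fun _ => (1 : ℝ≥0∞)) ω :=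
        lintegral_congr (fun ω => (step2 ω).symm)
    _ = ∑ A ∈ Finset.powersetCard b (Finset.univ : Finset (Fin t)),
          ∫⁻ ω, Set.indicator {ω' | ∀ i ∈ A, ξ i ω' = 1} (fun _ => (1 : ℝ≥0∞)) ω := hsum
    _ = _ := Finset.sum_congr rfl (fun A _ => hind A)


lemma pow_root_self {a : ℝ} (ha : 0 ≤ a) (n : ℕ) (hn : n ≠ 0) :
    ((a ^ n : ℝ)) ^ ((1 : ℝ) / n) = a := by
  rw [← Real.rpow_natCast a n, ← Real.rpow_mul ha]
  rw [mul_one_div, div_self (by exact_mod_cast hn), Real.rpow_one]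

lemma key_real_ineq (t b N : ℕ) (q : ℝ) (hq : 0 < q) (hq1 : q < 1)
    (ht : ((4 : ℝ) ^ (420 : ℕ)) ≤ (t : ℝ))
    (hb_lb : (t : ℝ) ^ ((1 : ℝ) / 10) - 2 ≤ (b : ℝ))
    (hb_ub : (b : ℝ) ≤ (t : ℝ) ^ ((1 : ℝ) / 10))
    (hN : (t : ℝ) ^ ((3 : ℝ) / 5) + (1 + (t : ℝ) ^ (-(1 : ℝ) / 12)) * q * (t : ℝ) ≤ (N : ℝ)) :
    (t.choose b : ℝ) * q ^ b ≤ (N.choose b : ℝ) * Real.exp (-(t : ℝ) ^ ((1 : ℝ) / 70)) := by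
  have ht1 : (1 : ℝ) ≤ t := le_trans (one_le_pow₀ (by norm_num)) ht
  have htpos : (0 : ℝ) < t := lt_of_lt_of_le one_pos ht1
  set ε : ℝ := (t : ℝ) ^ (-(1 : ℝ) / 12) with hεdef
  set e : ℝ := (t : ℝ) ^ ((1 : ℝ) / 70) with hedef
  have hεpos : 0 < ε := Real.rpow_pos_of_pos htpos _
  have hε1 : ε ≤ 1 := Real.rpow_le_one_of_one_le_of_nonpos ht1 (by norm_num)
  have h4 : (4 : ℝ) ≤ (t : ℝ) ^ ((1 : ℝ) / 10) := by
    calc (4 : ℝ) = (((4 : ℝ) ^ (10 : ℕ))) ^ ((1 : ℝ) / 10) := (pow_root_self (by norm_num) 10 (by norm_num)).symm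
    _ ≤ (t : ℝ) ^ ((1 : ℝ) / 10) := by
        apply Real.rpow_le_rpow (by positivity) _ (by norm_num)
        calc ((4 : ℝ) ^ (10 : ℕ)) ≤ (4 : ℝ) ^ (420 : ℕ) := by
              apply pow_le_pow_right₀ (by norm_num) (by norm_num)
        _ ≤ t := ht
  -- b bounds
  have hb_half : (t : ℝ) ^ ((1 : ℝ) / 10) / 2 ≤ (b : ℝ) := by
    have : (t : ℝ) ^ ((1 : ℝ) / 10) / 2 ≤ (t : ℝ) ^ ((1 : ℝ) / 10) - 2 := by linarith
    linarith
  have hbN : b ≤ N := by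
    have h1 : (b : ℝ) ≤ (t : ℝ) ^ ((3 : ℝ) / 5) := by
      calc (b : ℝ) ≤ (t : ℝ) ^ ((1 : ℝ) / 10) := hb_ub
      _ ≤ (t : ℝ) ^ ((3 : ℝ) / 5) := Real.rpow_le_rpow_of_exponent_le ht1 (by norm_num)
    have h0 : 0 ≤ (1 + ε) * q * (t : ℝ) := by positivity
    have h2 : (b : ℝ) ≤ (N : ℝ) := by linarith
    exact_mod_cast h2
  set X : ℝ := ((N + 1 - b : ℕ) : ℝ) with hXdef
  have hXcast : X = (N : ℝ) + 1 - (b : ℝ) := by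
    rw [hXdef, Nat.cast_sub (by omega)]; push_cast; ring
  have hX_lb : (1 + ε) * (q * t) ≤ X := by
    have hb35 : (b : ℝ) ≤ (t : ℝ) ^ ((3 : ℝ) / 5) + 1 := by
      have := Real.rpow_le_rpow_of_exponent_le ht1 (show (1:ℝ)/10 ≤ 3/5 by norm_num)
      linarith
    rw [hXcast]; nlinarith
  have hXpos : 0 < X := lt_of_lt_of_le (by positivity) hX_lb
  -- exp(e) ≤ (1+ε)^b
  have hexp_half : Real.exp (ε / 2) ≤ 1 + ε := by
    have h1 : 1 - ε / 2 ≤ Real.exp (-(ε / 2)) := by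
      have := Real.add_one_le_exp (-(ε / 2)); linarith
    have h2 : Real.exp (ε / 2) = (Real.exp (-(ε / 2)))⁻¹ := by
      rw [Real.exp_neg, inv_inv]
    rw [h2]
    have h3 : (0 : ℝ) < 1 - ε / 2 := by linarith
    rw [inv_le_iff_one_le_mul₀ (lt_of_lt_of_le h3 h1)]
    nlinarith [Real.exp_pos (-(ε/2))]
  have he_le : e ≤ (b : ℝ) * (ε / 2) := by
    have h60 : (t : ℝ) ^ ((1 : ℝ) / 10) * ε = (t : ℝ) ^ ((1 : ℝ) / 60) := by
      rw [hεdef, ← Real.rpow_add htpos]; norm_num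
    have h420 : (4 : ℝ) ≤ (t : ℝ) ^ ((1 : ℝ) / 420) := by
      calc (4 : ℝ) = ((4 : ℝ) ^ (420 : ℕ)) ^ ((1 : ℝ) / 420) :=
            (pow_root_self (by norm_num) 420 (by norm_num)).symm
      _ ≤ _ := Real.rpow_le_rpow (by positivity) ht (by norm_num)
    have hsplit : (t : ℝ) ^ ((1 : ℝ) / 60) = e * (t : ℝ) ^ ((1 : ℝ) / 420) := by
      rw [hedef, ← Real.rpow_add htpos]; norm_num
    have hepos : 0 < e := Real.rpow_pos_of_pos htpos _
    have h1 : 4 * e ≤ (t : ℝ) ^ ((1 : ℝ) / 60) := by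
      rw [hsplit]
      calc 4 * e = e * 4 := by ring
      _ ≤ e * (t : ℝ) ^ ((1 : ℝ) / 420) := mul_le_mul_of_nonneg_left h420 hepos.le
    have h2 : (t : ℝ) ^ ((1 : ℝ) / 60) ≤ 4 * ((b : ℝ) * (ε / 2)) := by
      rw [← h60]
      have h := mul_le_mul_of_nonneg_right hb_half (le_of_lt hεpos)
      ring_nf at h ⊢
      linarith
    linarith
  have hexp_le : Real.exp e ≤ (1 + ε) ^ b := by
    calc Real.exp e ≤ Real.exp ((b : ℝ) * (ε / 2)) := Real.exp_le_exp.mpr he_le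
    _ = (Real.exp (ε / 2)) ^ b := by
        rw [← Real.exp_nat_mul]
    _ ≤ (1 + ε) ^ b := pow_le_pow_left₀ (le_of_lt (Real.exp_pos _)) hexp_half b
  -- main claim : (q t)^b ≤ X^b * exp (-e)
  have hqtX : q * t ≤ X / (1 + ε) := by
    rw [le_div_iff₀ (by linarith)]; linarith [hX_lb]
  have hclaim : (q * t) ^ b ≤ X ^ b * Real.exp (-e) := by
    calc (q * t) ^ b ≤ (X / (1 + ε)) ^ b := pow_le_pow_left₀ (by positivity) hqtX b
    _ = X ^ b / (1 + ε) ^ b := div_pow X _ b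
    _ ≤ X ^ b / Real.exp e := by
        apply div_le_div_of_nonneg_left (by positivity) (Real.exp_pos _) hexp_le
    _ = X ^ b * Real.exp (-e) := by rw [Real.exp_neg]; ring
  -- put together with choose bounds
  have hfac : (0 : ℝ) < (Nat.factorial b : ℝ) := by exact_mod_cast Nat.factorial_pos b
  have h1 : (t.choose b : ℝ) * q ^ b ≤ (q * t) ^ b / (Nat.factorial b : ℝ) := by
    have := Nat.choose_le_pow_div (α := ℝ) b t
    calc (t.choose b : ℝ) * q ^ b ≤ ((t : ℝ) ^ b / (Nat.factorial b : ℝ)) * q ^ b := by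
          apply mul_le_mul_of_nonneg_right this (by positivity)
    _ = (q * t) ^ b / (Nat.factorial b : ℝ) := by rw [mul_pow]; ring
  have h2 : X ^ b / (Nat.factorial b : ℝ) ≤ (N.choose b : ℝ) := by
    rw [hXdef]; exact Nat.pow_le_choose (α := ℝ) b N
  calc (t.choose b : ℝ) * q ^ b ≤ (q * t) ^ b / (Nat.factorial b : ℝ) := h1
  _ ≤ (X ^ b * Real.exp (-e)) / (Nat.factorial b : ℝ) := by
      gcongr
  _ = (X ^ b / (Nat.factorial b : ℝ)) * Real.exp (-e) := by ring
  _ ≤ (N.choose b : ℝ) * Real.exp (-e) := by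
      apply mul_le_mul_of_nonneg_right h2 (le_of_lt (Real.exp_pos _))



/-- For exchangeable `{0,1}`-valued `ξ₁,…,ξ_t`, with
`b = 2⌊t^{1/10}/2⌋` and `P(ξ₁ = ⋯ = ξ_b = 1) ≤ q^b` for some `q ∈ (0,1)`:
there is an absolute constant `t₀` such that for all `t ≥ t₀`,
`P(Σᵢ ξᵢ ≥ t^{3/5} + (1 + t^{−1/12})·q·t) ≤ exp(−t^{1/70})`. -/
theorem exchangeable_stretched_exponential_bound :
    ∃ t₀ : ℕ, ∀ t : ℕ, t₀ ≤ t →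
    ∀ {Ω : Type} [MeasureSpace Ω] [IsProbabilityMeasure (ℙ : Measure Ω)],
    ∀ ξ : Fin t → Ω → ℝ,
      (∀ i, Measurable (ξ i)) →
      (∀ i ω, ξ i ω = 0 ∨ ξ i ω = 1) →
      (∀ σ : Equiv.Perm (Fin t),
        Measure.map (fun ω => fun i => ξ (σ i) ω) ℙ
          = Measure.map (fun ω => fun i => ξ i ω) ℙ) →
      ∀ q : ℝ, q ∈ Set.Ioo (0 : ℝ) 1 →
        (ℙ {ω | ∀ i : Fin t, (i : ℕ) < 2 * ⌊(t : ℝ) ^ ((1 : ℝ) / 10) / 2⌋₊ → ξ i ω = 1}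
            ≤ ENNReal.ofReal (q ^ (2 * ⌊(t : ℝ) ^ ((1 : ℝ) / 10) / 2⌋₊))) →
        ℙ {ω | (t : ℝ) ^ ((3 : ℝ) / 5)
                + (1 + (t : ℝ) ^ (-(1 : ℝ) / 12)) * q * t ≤ ∑ i, ξ i ω}
          ≤ ENNReal.ofReal (Real.exp (-(t : ℝ) ^ ((1 : ℝ) / 70))) := by
  classical
  refine ⟨4 ^ 420, ?_⟩
  intro t ht Ω _ _ ξ hmeas h01 hexch q hq hb_hyp
  obtain ⟨hq0, hq1⟩ := hq
  set b : ℕ := 2 * ⌊(t : ℝ) ^ ((1 : ℝ) / 10) / 2⌋₊ with hbdef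
  have htR : ((4 : ℝ) ^ (420 : ℕ)) ≤ (t : ℝ) := by exact_mod_cast Nat.cast_le.mpr ht
  have ht1 : (1 : ℝ) ≤ (t : ℝ) := le_trans (one_le_pow₀ (by norm_num)) htR
  have htpos : (0 : ℝ) < t := lt_of_lt_of_le one_pos ht1
  have hapos : (0 : ℝ) ≤ (t : ℝ) ^ ((1 : ℝ) / 10) / 2 := by positivity
  have hb_ub : (b : ℝ) ≤ (t : ℝ) ^ ((1 : ℝ) / 10) := by
    have := Nat.floor_le hapos
    rw [hbdef]; push_cast; linarith
  have hb_lb : (t : ℝ) ^ ((1 : ℝ) / 10) - 2 ≤ (b : ℝ) := by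
    have := Nat.sub_one_lt_floor ((t : ℝ) ^ ((1 : ℝ) / 10) / 2)
    rw [hbdef]; push_cast; linarith
  have hbt : b ≤ t := by
    have h1 : (t : ℝ) ^ ((1 : ℝ) / 10) ≤ (t : ℝ) := by
      calc (t : ℝ) ^ ((1 : ℝ) / 10) ≤ (t : ℝ) ^ (1 : ℝ) :=
            Real.rpow_le_rpow_of_exponent_le ht1 (by norm_num)
      _ = (t : ℝ) := Real.rpow_one _
    exact_mod_cast le_trans hb_ub h1
  -- the threshold and its ceiling
  set T : ℝ := (t : ℝ) ^ ((3 : ℝ) / 5) + (1 + (t : ℝ) ^ (-(1 : ℝ) / 12)) * q * t with hTdef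
  set N : ℕ := ⌈T⌉₊ with hNdef
  have hTN : T ≤ (N : ℝ) := Nat.le_ceil T
  -- base event via finset
  set B₀ : Finset (Fin t) := Finset.univ.filter (fun i : Fin t => (i : ℕ) < b) with hB₀def
  have hB₀img : B₀.image Fin.val = Finset.range b := by
    ext j
    simp only [Finset.mem_image, Finset.mem_range, hB₀def, Finset.mem_filter,
      Finset.mem_univ, true_and]
    constructor
    · rintro ⟨i, hi, rfl⟩; exact hi
    · intro hj; exact ⟨⟨j, lt_of_lt_of_le hj hbt⟩, hj, rfl⟩
  have hB₀card : B₀.card = b := by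
    rw [← Finset.card_range b, ← hB₀img, Finset.card_image_of_injective _ Fin.val_injective]
  have hBevent : {ω : Ω | ∀ i : Fin t, (i : ℕ) < b → ξ i ω = 1}
      = {ω : Ω | ∀ i ∈ B₀, ξ i ω = 1} := by
    ext ω; simp [hB₀def]
  -- sum over b-subsets
  have hsumA : ∑ A ∈ Finset.powersetCard b (Finset.univ : Finset (Fin t)),
      ℙ {ω | ∀ i ∈ A, ξ i ω = 1}
      = (t.choose b : ℝ≥0∞) * ℙ {ω | ∀ i ∈ B₀, ξ i ω = 1} := by
    rw [Finset.sum_congr rfl (fun A hA => prob_eq_of_exchangeable ξ hmeas hexch A B₀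
      (by rw [hB₀card]; exact (Finset.mem_powersetCard.mp hA).2)),
      Finset.sum_const, Finset.card_powersetCard, Finset.card_univ, Fintype.card_fin,
      nsmul_eq_mul]
  -- counting
  have hsum01 : ∀ ω, ∑ i, ξ i ω
      = ((Finset.univ.filter (fun i => ξ i ω = 1)).card : ℝ) := by
    intro ω
    rw [← Finset.sum_filter_add_sum_filter_not Finset.univ (fun i => ξ i ω = 1)]
    have h1 : ∑ i ∈ Finset.univ.filter (fun i => ξ i ω = 1), ξ i ω
        = ((Finset.univ.filter (fun i => ξ i ω = 1)).card : ℝ) := by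
      rw [Finset.sum_congr rfl (fun i hi => (Finset.mem_filter.mp hi).2),
        Finset.sum_const, nsmul_eq_mul, mul_one]
    have h2 : ∑ i ∈ Finset.univ.filter (fun i => ¬ ξ i ω = 1), ξ i ω = 0 := by
      apply Finset.sum_eq_zero
      intro i hi
      rcases h01 i ω with h | h
      · exact h
      · exact absurd h (Finset.mem_filter.mp hi).2
    rw [h1, h2, add_zero]
  set Tgt : Set Ω := {ω | T ≤ ∑ i, ξ i ω} with hTgtdef
  have hTgtMeas : MeasurableSet Tgt := by
    apply measurableSet_le measurable_const
    exact Finset.measurable_sum Finset.univ (fun i _ => hmeas i)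
  have hcount : ∀ ω ∈ Tgt, N ≤ (Finset.univ.filter (fun i => ξ i ω = 1)).card := by
    intro ω hω
    apply Nat.ceil_le.mpr
    rw [← hsum01 ω]
    exact hω
  have hmarkov := choose_count_markov (b := b) ξ hmeas Tgt hTgtMeas hcount
  -- need b ≤ N for choose_pos
  have hbN : b ≤ N := by
    have h1 : (b : ℝ) ≤ (t : ℝ) ^ ((3 : ℝ) / 5) := by
      calc (b : ℝ) ≤ (t : ℝ) ^ ((1 : ℝ) / 10) := hb_ub
      _ ≤ (t : ℝ) ^ ((3 : ℝ) / 5) := Real.rpow_le_rpow_of_exponent_le ht1 (by norm_num)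
    have h0 : 0 ≤ (1 + (t : ℝ) ^ (-(1 : ℝ) / 12)) * q * t := by positivity
    have : (b : ℝ) ≤ (N : ℝ) := by rw [hTdef] at hTN; linarith
    exact_mod_cast this
  have hkey := key_real_ineq t b N q hq0 hq1 htR hb_lb hb_ub (by rw [hTdef] at hTN; exact hTN)
  -- combine in ℝ≥0∞
  have hchain : (N.choose b : ℝ≥0∞) * ℙ Tgt
      ≤ (N.choose b : ℝ≥0∞) * ENNReal.ofReal (Real.exp (-(t : ℝ) ^ ((1 : ℝ) / 70))) := by
    calc (N.choose b : ℝ≥0∞) * ℙ Tgt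
        ≤ (t.choose b : ℝ≥0∞) * ℙ {ω | ∀ i ∈ B₀, ξ i ω = 1} := by
          rw [← hsumA]; exact hmarkov
      _ ≤ (t.choose b : ℝ≥0∞) * ENNReal.ofReal (q ^ b) := by
          apply mul_le_mul_right
          rw [← hBevent]
          exact hb_hyp
      _ = ENNReal.ofReal ((t.choose b : ℝ) * q ^ b) := by
          rw [ENNReal.ofReal_mul (by positivity), ENNReal.ofReal_natCast]
      _ ≤ ENNReal.ofReal ((N.choose b : ℝ) * Real.exp (-(t : ℝ) ^ ((1 : ℝ) / 70))) :=
          ENNReal.ofReal_le_ofReal hkey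
      _ = (N.choose b : ℝ≥0∞) * ENNReal.ofReal (Real.exp (-(t : ℝ) ^ ((1 : ℝ) / 70))) := by
          rw [ENNReal.ofReal_mul (by positivity), ENNReal.ofReal_natCast]
  have hne : ((N.choose b : ℝ≥0∞)) ≠ 0 :=
    Nat.cast_ne_zero.mpr (Nat.choose_pos hbN).ne'
  exact (ENNReal.mul_le_mul_iff_right hne (ENNReal.natCast_ne_top _)).mp hchain
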